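/- Let G be a finite group and x ∈ S the simplex of R[G]. Then the set S(x) of all limit points of the sequence (x^n)_{n∈ℕ} equals {c_x x^r : 0 ≤ r < m_x}. In particular, (x^n) converges (necessarily to c_x) if and only if x^1 ∈ R[G_x] equivalently m_x = 1. -/

import Mathlib

open Filter Topology

open Filter Topology

set_option linter.unusedSectionVars false
set_option linter.unusedVariables false
set_option maxHeartbeats 1000000

noncomputable section
namespace Stmt9Aux
open scoped Classical

variable {G : Type*} [Group G] [Fintype G]

/-! ### Generic coefficient lemmas -/

lemma mul_apply' (u v : MonoidAlgebra ℝ G) (x : G) :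
    (u * v).coeff x = ∑ a : G, ∑ b : G, if a * b = x then u.coeff a * v.coeff b else 0 := by
  classical
  rw [MonoidAlgebra.coeff_mul]
  rw [Finsupp.sum_fintype]
  · refine Finset.sum_congr rfl fun a _ => ?_
    rw [Finsupp.sum_fintype]
    intro b; simp
  · intro a
    simp

def tot (u : MonoidAlgebra ℝ G) : ℝ := ∑ g : G, u.coeff g

lemma tot_mul (u v : MonoidAlgebra ℝ G) : tot (u * v) = tot u * tot v := by
  classical
  unfold tot
  simp only [mul_apply']
  rw [Finset.sum_comm]
  rw [Finset.sum_mul_sum]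
  refine Finset.sum_congr rfl fun a _ => ?_
  rw [Finset.sum_comm]
  refine Finset.sum_congr rfl fun b _ => ?_
  simp

lemma tot_one : tot (1 : MonoidAlgebra ℝ G) = 1 := by
  unfold tot
  rw [MonoidAlgebra.one_def]
  rw [Finset.sum_eq_single (1 : G)]
  · simp
  · intro b _ hb
    simp [MonoidAlgebra.single_apply, Ne.symm hb]
  · simp

lemma mul_apply_nonneg {u v : MonoidAlgebra ℝ G} (hu : ∀ g, 0 ≤ u.coeff g) (hv : ∀ g, 0 ≤ v.coeff g)
    (x : G) : 0 ≤ (u * v).coeff x := by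
  rw [mul_apply']
  refine Finset.sum_nonneg fun a _ => Finset.sum_nonneg fun b _ => ?_
  split
  · exact mul_nonneg (hu a) (hv b)
  · exact le_refl _

def dd (u : MonoidAlgebra ℝ G) : ℝ := ∑ g : G, |u.coeff g|

lemma dd_nonneg (u : MonoidAlgebra ℝ G) : 0 ≤ dd u :=
  Finset.sum_nonneg fun g _ => abs_nonneg _

lemma abs_apply_le_dd (u : MonoidAlgebra ℝ G) (g : G) : |u.coeff g| ≤ dd u :=
  Finset.single_le_sum (fun h _ => abs_nonneg (u.coeff h)) (Finset.mem_univ g)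

lemma dd_eq_tot {u : MonoidAlgebra ℝ G} (hu : ∀ g, 0 ≤ u.coeff g) : dd u = tot u :=
  Finset.sum_congr rfl fun g _ => abs_of_nonneg (hu g)

lemma dd_mul_le (u v : MonoidAlgebra ℝ G) : dd (u * v) ≤ dd u * dd v := by
  classical
  unfold dd
  calc ∑ g : G, |(u*v).coeff g|
      ≤ ∑ g : G, ∑ a : G, ∑ b : G, (if a * b = g then |u.coeff a| * |v.coeff b| else 0) := by
        refine Finset.sum_le_sum fun g _ => ?_
        rw [mul_apply']
        refine (Finset.abs_sum_le_sum_abs _ _).trans ?_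
        refine Finset.sum_le_sum fun a _ => ?_
        refine (Finset.abs_sum_le_sum_abs _ _).trans ?_
        refine Finset.sum_le_sum fun b _ => ?_
        split <;> simp [abs_mul]
    _ = (∑ a : G, |u.coeff a|) * ∑ b : G, |v.coeff b| := by
        rw [Finset.sum_comm, Finset.sum_mul_sum]
        refine Finset.sum_congr rfl fun a _ => ?_
        rw [Finset.sum_comm]
        refine Finset.sum_congr rfl fun b _ => ?_
        simp

lemma mem_support_mul {u v : MonoidAlgebra ℝ G} (hu : ∀ g, 0 ≤ u.coeff g) (hv : ∀ g, 0 ≤ v.coeff g)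
    {a b : G} (ha : a ∈ u.coeff.support) (hb : b ∈ v.coeff.support) : a * b ∈ (u * v).coeff.support := by
  classical
  rw [Finsupp.mem_support_iff] at *
  have hpos : 0 < u.coeff a * v.coeff b :=
    mul_pos (lt_of_le_of_ne (hu a) (Ne.symm ha)) (lt_of_le_of_ne (hv b) (Ne.symm hb))
  have h1 : u.coeff a * v.coeff b ≤ (u * v).coeff (a * b) := by
    rw [mul_apply']
    have h2 : ∀ a' : G, 0 ≤ ∑ b' : G, (if a' * b' = a * b then u.coeff a' * v.coeff b' else 0) := by
      intro a'
      refine Finset.sum_nonneg fun b' _ => ?_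
      split
      · exact mul_nonneg (hu a') (hv b')
      · exact le_refl _
    calc u.coeff a * v.coeff b = ∑ b' : G, (if a * b' = a * b then u.coeff a * v.coeff b' else 0) := by
          simp only [mul_right_inj]
          rw [Finset.sum_ite_eq' Finset.univ b (fun b' => u.coeff a * v.coeff b')]
          simp
      _ ≤ _ := Finset.single_le_sum (fun a' _ => h2 a') (Finset.mem_univ a)
  linarith

/-! ### Submonoid closure is a subgroup -/

def toSubgrp (M : Submonoid G) : Subgroup G :=
  { M with
    inv_mem' := by
      intro a ha
      have h1 : a ^ orderOf a = 1 := pow_orderOf_eq_one a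
      have h2 : 0 < orderOf a := orderOf_pos a
      have h3 : a ^ (orderOf a - 1) * a = 1 := by
        rw [← pow_succ, Nat.sub_add_cancel h2, h1]
      have := eq_inv_of_mul_eq_one_left h3
      rw [← this]
      exact M.pow_mem ha _ }

lemma subgroup_closure_subset_submonoid (S : Set G) :
    (Subgroup.closure S : Set G) ⊆ (Submonoid.closure S : Set G) := by
  intro g hg
  have : Subgroup.closure S ≤ toSubgrp (Submonoid.closure S) :=
    Subgroup.closure_le _ |>.mpr (Submonoid.subset_closure)
  exact this hg

/-! ### Context with a fixed probability `x` -/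

variable {x : MonoidAlgebra ℝ G} (hx0 : ∀ g, 0 ≤ x.coeff g) (hx1 : tot x = 1)
include hx0 hx1

lemma pow_nonneg' (k : ℕ) (g : G) : 0 ≤ (x ^ k).coeff g := by
  induction k generalizing g with
  | zero =>
    rw [pow_zero, MonoidAlgebra.one_def, MonoidAlgebra.single_apply]
    split <;> norm_num
  | succ k ih =>
    rw [pow_succ]
    exact mul_apply_nonneg ih hx0 g

lemma tot_pow (k : ℕ) : tot (x ^ k) = 1 := by
  induction k with
  | zero => rw [pow_zero]; exact tot_one
  | succ k ih => rw [pow_succ, tot_mul, ih, hx1, one_mul]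

lemma supp_pow_nonempty (k : ℕ) : (x ^ k).coeff.support.Nonempty := by
  rw [Finsupp.support_nonempty_iff, Ne, MonoidAlgebra.coeff_eq_zero]
  intro h
  have := tot_pow hx0 hx1 k
  rw [h] at this
  simp [tot] at this

lemma mem_supp_pow_mul {i j : ℕ} {a b : G} (ha : a ∈ (x ^ i).coeff.support)
    (hb : b ∈ (x ^ j).coeff.support) : a * b ∈ (x ^ (i + j)).coeff.support := by
  rw [pow_add]
  exact mem_support_mul (pow_nonneg' hx0 hx1 i) (pow_nonneg' hx0 hx1 j) ha hb

variable (H : Subgroup G)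

/-- the set of "good" exponents -/
def good (x : MonoidAlgebra ℝ G) (H : Subgroup G) (k : ℕ) : Prop :=
  ∀ g ∈ (x ^ k).coeff.support, g ∈ H

lemma good_add {i j : ℕ} (hi : good x H i) (hj : good x H j) : good x H (i + j) := by
  intro g hg
  rw [pow_add] at hg
  have := MonoidAlgebra.support_coeff_mul_subset (x ^ i) (x ^ j) hg
  rw [Finset.mem_mul] at this
  obtain ⟨a, ha, b, hb, rfl⟩ := this
  exact H.mul_mem (hi a ha) (hj b hb)

lemma good_sub {i j : ℕ} (hi : good x H i) (hij : good x H (i + j)) : good x H j := by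
  intro g hg
  obtain ⟨s, hs⟩ := supp_pow_nonempty hx0 hx1 i
  have h1 : s * g ∈ (x ^ (i + j)).coeff.support := mem_supp_pow_mul hx0 hx1 hs hg
  have h2 : s * g ∈ H := hij _ h1
  have h3 : s ∈ H := hi s hs
  have := H.mul_mem (H.inv_mem h3) h2
  rwa [inv_mul_cancel_left] at this

lemma good_mul_nat {k : ℕ} (hk : good x H k) (j : ℕ) (hj : 1 ≤ j) : good x H (j * k) := by
  induction j with
  | zero => omega
  | succ j ih =>
    rcases Nat.eq_or_lt_of_le hj with h | h
    · simpa [← h] using hk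
    · have := ih (by omega)
      have h2 : good x H (j * k + k) := good_add hx0 hx1 H this hk
      simpa [Nat.succ_mul] using h2

end Stmt9Aux

noncomputable section
namespace Stmt9Aux
open scoped Classical

variable {G : Type*} [Group G] [Fintype G]
variable {x : MonoidAlgebra ℝ G} (hx0 : ∀ g, 0 ≤ x.coeff g) (hx1 : tot x = 1)
variable {H : Subgroup G} {n m : ℕ}

def HF (H : Subgroup G) : Finset G := Finset.univ.filter (fun g => g ∈ H)

lemma mem_HF {g : G} : g ∈ HF H ↔ g ∈ H := by simp [HF]

include hx0 hx1 in
lemma m_dvd_of_good (hm : IsLeast {k : ℕ | 0 < k ∧ good x H k} m)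
    (hn0 : 0 < n) (hgn : good x H n) : m ∣ n := by
  have hm0 : 0 < m := hm.1.1
  have hmn : m ≤ n := hm.2 ⟨hn0, hgn⟩
  rcases Nat.eq_zero_or_pos (n % m) with hr | hr
  · exact Nat.dvd_of_mod_eq_zero hr
  exfalso
  have hq : 1 ≤ n / m := Nat.one_le_div_iff hm0 |>.mpr hmn
  have hgq : good x H ((n / m) * m) := good_mul_nat hx0 hx1 H hm.1.2 _ hq
  have hdecomp : (n / m) * m + n % m = n := by
    rw [mul_comm]; exact Nat.div_add_mod n m
  have hgr : good x H (n % m) := by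
    refine good_sub hx0 hx1 H hgq ?_
    rw [hdecomp]; exact hgn
  have := hm.2 ⟨hr, hgr⟩
  have := Nat.mod_lt n hm0
  omega

include hx0 hx1 in
lemma supp_pow_mono (hn1 : (1 : G) ∈ (x ^ n).coeff.support) (a : ℕ) :
    (x ^ a).coeff.support ⊆ (x ^ (a + n)).coeff.support := by
  intro t ht
  have := mem_supp_pow_mul hx0 hx1 ht hn1
  rwa [mul_one] at this

include hx0 hx1 in
lemma exists_stable (hm : IsLeast {k : ℕ | 0 < k ∧ good x H k} m)
    (hn0 : 0 < n) (hn1 : (1 : G) ∈ (x ^ n).coeff.support)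
    (hH : H = Subgroup.closure ((x ^ n).coeff.support : Set G)) :
    ∃ N : ℕ, 1 ≤ N ∧ ∀ j : ℕ, N ≤ j → (x ^ (j * m)).coeff.support = HF H := by
  have hm0 : 0 < m := hm.1.1
  have hgn : good x H n := by
    intro g hg
    rw [hH]
    exact Subgroup.subset_closure hg
  have hgm : good x H m := hm.1.2
  have hmn : m ∣ n := m_dvd_of_good hx0 hx1 hm hn0 hgn
  set A : ℕ → Finset G := fun k => (x ^ (m + k * n)).coeff.support with hA
  have hmono : ∀ k, A k ⊆ A (k + 1) := by
    intro k
    have := supp_pow_mono hx0 hx1 hn1 (m + k * n)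
    have harith : m + k * n + n = m + (k + 1) * n := by ring
    rwa [harith] at this
  have hmono' : Monotone A := monotone_nat_of_le_succ hmono
  -- stabilization
  have hstab : ∃ k0, A k0 = A (k0 + 1) := by
    by_contra hcon
    push_neg at hcon
    have hsm : StrictMono (fun k => (A k).card) := by
      refine strictMono_nat_of_lt_succ fun k => ?_
      exact Finset.card_lt_card (Finset.ssubset_iff_subset_ne.mpr ⟨hmono k, hcon k⟩)
    have h1 : Fintype.card G + 1 ≤ (A (Fintype.card G + 1)).card := hsm.le_apply
    have h2 : (A (Fintype.card G + 1)).card ≤ Fintype.card G := Finset.card_le_univ _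
    omega
  obtain ⟨k0, hk0⟩ := hstab
  -- closure of A k0 under right multiplication by the submonoid closure
  have hclos : ∀ w ∈ Submonoid.closure ((x ^ n).coeff.support : Set G),
      ∀ t ∈ A k0, t * w ∈ A k0 := by
    intro w hw
    induction hw using Submonoid.closure_induction with
    | mem s hs =>
      intro t ht
      rw [hk0]
      have harith : m + k0 * n + n = m + (k0 + 1) * n := by ring
      have := mem_supp_pow_mul hx0 hx1 (i := m + k0 * n) (j := n) ht hs
      rwa [harith] at this
    | one => intro t ht; rwa [mul_one]
    | mul w1 w2 hw1 hw2 ih1 ih2 =>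
      intro t ht
      rw [← mul_assoc]
      exact ih2 _ (ih1 _ ht)
  -- the stable support is all of H
  have hgood_a : good x H (m + k0 * n) := by
    rcases Nat.eq_zero_or_pos k0 with h | h
    · subst h; simpa using hgm
    · exact good_add hx0 hx1 H hgm (good_mul_nat hx0 hx1 H hgn _ h)
  have hAH : A k0 = HF H := by
    apply Finset.Subset.antisymm
    · intro t ht
      rw [mem_HF]
      exact hgood_a t ht
    · intro h hh
      rw [mem_HF] at hh
      obtain ⟨s, hs⟩ := supp_pow_nonempty hx0 hx1 m
      have hsH : s ∈ H := hgm s hs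
      have hsh : s⁻¹ * h ∈ H := H.mul_mem (H.inv_mem hsH) hh
      have hsub : s⁻¹ * h ∈ Submonoid.closure ((x ^ n).coeff.support : Set G) := by
        apply subgroup_closure_subset_submonoid
        rw [← hH]
        exact hsh
      have hs0 : s ∈ A 0 := by
        have : m + 0 * n = m := by ring
        rw [hA]; simpa [this] using hs
      have hsk : s ∈ A k0 := hmono' (Nat.zero_le k0) hs0
      have := hclos _ hsub s hsk
      rwa [mul_inv_cancel_left] at this
  -- propagate along multiples of m
  set a := m + k0 * n with ha
  have hma : m ∣ a := Dvd.dvd.add (dvd_refl m) (Dvd.dvd.mul_left hmn k0)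
  have hprop : ∀ j : ℕ, (x ^ (a + j * m)).coeff.support = HF H := by
    intro j
    induction j with
    | zero => simpa using hAH
    | succ j ih =>
      have hgood : good x H (a + (j + 1) * m) := by
        refine good_add hx0 hx1 H hgood_a (good_mul_nat hx0 hx1 H hgm _ (by omega))
      apply Finset.Subset.antisymm
      · intro t ht
        rw [mem_HF]
        exact hgood t ht
      · intro h hh
        rw [mem_HF] at hh
        obtain ⟨t, ht⟩ := supp_pow_nonempty hx0 hx1 m
        have htH : t ∈ H := hgm t ht
        have h1 : h * t⁻¹ ∈ (x ^ (a + j * m)).coeff.support := by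
          rw [ih, mem_HF]
          exact H.mul_mem hh (H.inv_mem htH)
        have := mem_supp_pow_mul hx0 hx1 h1 ht
        have harith : a + j * m + m = a + (j + 1) * m := by ring
        rwa [inv_mul_cancel_right, harith] at this
  refine ⟨a / m, ?_, ?_⟩
  · have : 0 < a := by omega
    exact (Nat.one_le_div_iff hm0).mpr (Nat.le_of_dvd this hma)
  · intro j hj
    have h1 : j * m = a + (j - a / m) * m := by
      have h2 : a / m * m = a := Nat.div_mul_cancel hma
      have h3 : a / m ≤ j := hj
      have h4 : j = a / m + (j - a / m) := by omega
      calc j * m = (a / m + (j - a / m)) * m := by rw [← h4]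
        _ = a + (j - a / m) * m := by rw [add_mul, h2]
    rw [h1]
    exact hprop _

end Stmt9Aux

noncomputable section
namespace Stmt9Aux
open scoped Classical

variable {G : Type*} [Group G] [Fintype G]

def unif (H : Subgroup G) : MonoidAlgebra ℝ G :=
  (Nat.card H : ℝ)⁻¹ • ∑ g ∈ Finset.univ.filter (· ∈ H), MonoidAlgebra.single g (1 : ℝ)

variable {H : Subgroup G}

lemma card_HF : (HF H).card = Nat.card H := by
  rw [Nat.card_eq_fintype_card, Fintype.card_subtype]
  rfl

lemma HF_card_pos : 0 < (HF H).card := by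
  rw [Finset.card_pos]
  exact ⟨1, mem_HF.mpr H.one_mem⟩

lemma filter_eq_HF : Finset.univ.filter (· ∈ H) = HF H := rfl

lemma unif_apply (g : G) : (unif H).coeff g = if g ∈ H then ((HF H).card : ℝ)⁻¹ else 0 := by
  rw [unif, ← card_HF, filter_eq_HF, MonoidAlgebra.coeff_smul, Finsupp.smul_apply, MonoidAlgebra.coeff_sum, Finsupp.finset_sum_apply]
  have h1 : ∀ g' : G, (MonoidAlgebra.single g' (1:ℝ)).coeff g = if g' = g then (1:ℝ) else 0 :=
    fun g' => MonoidAlgebra.single_apply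
  rw [Finset.sum_congr rfl (fun g' _ => h1 g')]
  rw [Finset.sum_ite_eq' (HF H) g (fun _ => (1:ℝ))]
  by_cases hg : g ∈ H <;> simp [mem_HF, hg]

lemma unif_nonneg (g : G) : 0 ≤ (unif H).coeff g := by
  rw [unif_apply]
  split
  · positivity
  · exact le_refl _

lemma support_unif : (unif H).coeff.support = HF H := by
  have hcard : ((HF H).card : ℝ) ≠ 0 := by
    have := HF_card_pos (H := H)
    positivity
  ext g
  rw [Finsupp.mem_support_iff, unif_apply, mem_HF]
  by_cases hg : g ∈ H <;> simp [hg, inv_ne_zero, hcard]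

lemma tot_unif : tot (unif H) = 1 := by
  unfold tot
  rw [Finset.sum_congr rfl (fun g _ => unif_apply g)]
  have hcard : ((HF H).card : ℝ) ≠ 0 := by
    have := HF_card_pos (H := H)
    positivity
  rw [← Finset.sum_filter]
  rw [Finset.sum_const, filter_eq_HF, nsmul_eq_mul]
  rw [mul_inv_cancel₀ hcard]

lemma single_mul_unif {a : G} (ha : a ∈ H) :
    MonoidAlgebra.single a (1 : ℝ) * unif H = unif H := by
  rw [unif, mul_smul_comm, Finset.mul_sum, filter_eq_HF]
  congr 1
  rw [Finset.sum_congr rfl (fun g _ => MonoidAlgebra.single_mul_single _ _ (1:ℝ) (1:ℝ))]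
  simp only [one_mul]
  refine Finset.sum_nbij' (fun g => a * g) (fun g => a⁻¹ * g) ?_ ?_ ?_ ?_ ?_
  · intro g hg; rw [mem_HF] at *; exact H.mul_mem ha hg
  · intro g hg; rw [mem_HF] at *; exact H.mul_mem (H.inv_mem ha) hg
  · intro g _; simp
  · intro g _; simp
  · intro g _; rfl

lemma unif_mul_single {a : G} (ha : a ∈ H) :
    unif H * MonoidAlgebra.single a (1 : ℝ) = unif H := by
  rw [unif, smul_mul_assoc, Finset.sum_mul, filter_eq_HF]
  congr 1
  rw [Finset.sum_congr rfl (fun g _ => MonoidAlgebra.single_mul_single _ _ (1:ℝ) (1:ℝ))]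
  simp only [mul_one]
  refine Finset.sum_nbij' (fun g => g * a) (fun g => g * a⁻¹) ?_ ?_ ?_ ?_ ?_
  · intro g hg; rw [mem_HF] at *; exact H.mul_mem hg ha
  · intro g hg; rw [mem_HF] at *; exact H.mul_mem hg (H.inv_mem ha)
  · intro g _; simp
  · intro g _; simp
  · intro g _; rfl

lemma eq_sum_single (u : MonoidAlgebra ℝ G) :
    u = ∑ g : G, MonoidAlgebra.single g (u.coeff g) := by
  conv_lhs => rw [← MonoidAlgebra.sum_coeff_single u]
  rw [Finsupp.sum_fintype]
  intro g; simp

lemma mul_unif {u : MonoidAlgebra ℝ G} (hu : ∀ g ∈ u.coeff.support, g ∈ H) :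
    u * unif H = tot u • unif H := by
  conv_lhs => rw [eq_sum_single u]
  rw [Finset.sum_mul]
  have hterm : ∀ g : G, MonoidAlgebra.single g (u.coeff g) * unif H = u.coeff g • unif H := by
    intro g
    have h1 : MonoidAlgebra.single g (u.coeff g) = u.coeff g • MonoidAlgebra.single g 1 := by
      rw [MonoidAlgebra.smul_single', mul_one]
    rw [h1, smul_mul_assoc]
    by_cases hg : g ∈ H
    · rw [single_mul_unif hg]
    · have : u.coeff g = 0 := by
        by_contra hne
        exact hg (hu g (Finsupp.mem_support_iff.mpr hne))
      rw [this, zero_smul, zero_smul]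
  rw [Finset.sum_congr rfl (fun g _ => hterm g), ← Finset.sum_smul]
  rfl

lemma unif_mul {u : MonoidAlgebra ℝ G} (hu : ∀ g ∈ u.coeff.support, g ∈ H) :
    unif H * u = tot u • unif H := by
  conv_lhs => rw [eq_sum_single u]
  rw [Finset.mul_sum]
  have hterm : ∀ g : G, unif H * MonoidAlgebra.single g (u.coeff g) = u.coeff g • unif H := by
    intro g
    have h1 : MonoidAlgebra.single g (u.coeff g) = u.coeff g • MonoidAlgebra.single g 1 := by
      rw [MonoidAlgebra.smul_single', mul_one]
    rw [h1, mul_smul_comm]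
    by_cases hg : g ∈ H
    · rw [unif_mul_single hg]
    · have : u.coeff g = 0 := by
        by_contra hne
        exact hg (hu g (Finsupp.mem_support_iff.mpr hne))
      rw [this, zero_smul, zero_smul]
  rw [Finset.sum_congr rfl (fun g _ => hterm g), ← Finset.sum_smul]
  rfl

end Stmt9Aux

noncomputable section
namespace Stmt9Aux
open scoped Classical

variable {G : Type*} [Group G] [Fintype G]

lemma tot_sub (u v : MonoidAlgebra ℝ G) : tot (u - v) = tot u - tot v := by
  unfold tot
  rw [← Finset.sum_sub_distrib]
  exact Finset.sum_congr rfl fun g _ => Finsupp.sub_apply u.coeff v.coeff g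

lemma tot_smul (r : ℝ) (u : MonoidAlgebra ℝ G) : tot (r • u) = r * tot u := by
  unfold tot
  rw [Finset.mul_sum]
  exact Finset.sum_congr rfl fun g _ => Finsupp.smul_apply r u.coeff g

variable {x : MonoidAlgebra ℝ G} (hx0 : ∀ g, 0 ≤ x.coeff g) (hx1 : tot x = 1)
variable {H : Subgroup G} {m N : ℕ}

include hx0 hx1 in
lemma tendsto_main (hm : IsLeast {k : ℕ | 0 < k ∧ good x H k} m)
    (hN1 : 1 ≤ N) (hNs : ∀ j, N ≤ j → (x ^ (j * m)).coeff.support = HF H) (r : ℕ) (g : G) :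
    Tendsto (fun k => (x ^ (k * m + r)).coeff g) atTop (nhds ((unif H * x ^ r).coeff g)) := by
  have hm0 : 0 < m := hm.1.1
  have hgm : good x H m := hm.1.2
  have hcard : (0:ℝ) < (HF H).card := by exact_mod_cast HF_card_pos (H := H)
  set P : MonoidAlgebra ℝ G := x ^ (N * m) with hP
  have hP0 : ∀ g, 0 ≤ P.coeff g := pow_nonneg' hx0 hx1 _
  have hPsupp : P.coeff.support = HF H := hNs N (le_refl N)
  have hPtot : tot P = 1 := tot_pow hx0 hx1 _
  -- the minimum of P over HF H
  have hne : (HF H).Nonempty := ⟨1, mem_HF.mpr H.one_mem⟩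
  set ε : ℝ := (HF H).inf' hne (fun h => P.coeff h) with hε
  have hεpos : 0 < ε := by
    obtain ⟨h0, hh0, hval⟩ := Finset.exists_mem_eq_inf' hne (fun h => P.coeff h)
    rw [hε, hval]
    have : h0 ∈ P.coeff.support := by rw [hPsupp]; exact hh0
    rw [Finsupp.mem_support_iff] at this
    exact lt_of_le_of_ne (hP0 h0) (Ne.symm this)
  set θ : ℝ := (HF H).card * ε with hθ
  have hθpos : 0 < θ := mul_pos hcard hεpos
  set w : MonoidAlgebra ℝ G := P - θ • unif H with hw
  have hw0 : ∀ g, 0 ≤ w.coeff g := by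
    intro g
    rw [hw, MonoidAlgebra.coeff_sub, Finsupp.sub_apply, MonoidAlgebra.coeff_smul, Finsupp.smul_apply, unif_apply]
    by_cases hg : g ∈ H
    · rw [if_pos hg]
      have h1 : θ * ((HF H).card : ℝ)⁻¹ = ε := by
        rw [hθ]; field_simp
      rw [smul_eq_mul, h1]
      have h2 : ε ≤ P.coeff g := Finset.inf'_le _ (mem_HF.mpr hg)
      linarith
    · rw [if_neg hg, smul_eq_mul, mul_zero, sub_zero]
      exact hP0 g
  have hwtot : tot w = 1 - θ := by
    rw [hw, tot_sub, tot_smul, tot_unif, hPtot, mul_one]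
  have hθle : θ ≤ 1 := by
    have : 0 ≤ tot w := Finset.sum_nonneg fun g _ => hw0 g
    linarith [hwtot ▸ this]
  have hwsupp : ∀ g ∈ w.coeff.support, g ∈ H := by
    intro g hg
    by_contra hgH
    have h1 : P.coeff g = 0 := by
      rw [← Finsupp.notMem_support_iff, hPsupp]
      rw [mem_HF]; exact hgH
    have h2 : (unif H).coeff g = 0 := by rw [unif_apply, if_neg hgH]
    rw [Finsupp.mem_support_iff, hw, MonoidAlgebra.coeff_sub, Finsupp.sub_apply, MonoidAlgebra.coeff_smul, Finsupp.smul_apply, h1, h2] at hg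
    simp at hg
  -- contraction estimate
  have hcontract : ∀ u : MonoidAlgebra ℝ G, (∀ g ∈ u.coeff.support, g ∈ H) → tot u = 0 →
      dd (u * P) ≤ (1 - θ) * dd u := by
    intro u husupp hutot
    have hdecomp : P = θ • unif H + w := by rw [hw]; abel
    have h1 : u * P = u * w := by
      rw [hdecomp, mul_add, mul_smul_comm, mul_unif husupp, hutot, zero_smul, smul_zero,
        zero_add]
    rw [h1]
    calc dd (u * w) ≤ dd u * dd w := dd_mul_le u w
      _ = (1 - θ) * dd u := by rw [dd_eq_tot hw0, hwtot, mul_comm]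
  -- the distance sequence
  set D : ℕ → ℝ := fun k => dd (x ^ (k * m) - unif H) with hD
  have hDnonneg : ∀ k, 0 ≤ D k := fun k => dd_nonneg _
  have hsupp_k : ∀ k, 1 ≤ k → ∀ g ∈ (x ^ (k * m) - unif H).coeff.support, g ∈ H := by
    intro k hk g hg
    have := Finsupp.support_sub (f := (x ^ (k * m)).coeff) (g := (unif H).coeff) hg
    rw [Finset.mem_union] at this
    rcases this with h | h
    · exact good_mul_nat hx0 hx1 H hgm k hk g h
    · rw [support_unif, mem_HF] at h; exact h
  have htot_k : ∀ k, tot (x ^ (k * m) - unif H) = 0 := by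
    intro k
    rw [tot_sub, tot_pow hx0 hx1, tot_unif, sub_self]
  -- one-step monotonicity
  have hstep1 : ∀ k, 1 ≤ k → D (k + 1) ≤ D k := by
    intro k hk
    have hgoodm : ∀ g ∈ (x ^ m).coeff.support, g ∈ H := hgm
    have h1 : (x ^ (k * m) - unif H) * x ^ m = x ^ ((k + 1) * m) - unif H := by
      rw [sub_mul, ← pow_add, unif_mul hgoodm, tot_pow hx0 hx1, one_smul]
      congr 2
      ring
    have h2 : dd ((x ^ (k * m) - unif H) * x ^ m) ≤ D k * dd (x ^ m) := dd_mul_le _ _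
    rw [h1] at h2
    rw [hD]
    calc dd (x ^ ((k+1) * m) - unif H) ≤ D k * dd (x ^ m) := h2
      _ = D k := by rw [dd_eq_tot (pow_nonneg' hx0 hx1 m), tot_pow hx0 hx1, mul_one]
  have hanti : ∀ a b, 1 ≤ a → a ≤ b → D b ≤ D a := by
    intro a b ha hab
    induction b, hab using Nat.le_induction with
    | base => exact le_refl _
    | succ b hab ih => exact le_trans (hstep1 b (le_trans ha hab)) ih
  -- N-step contraction
  have hstepN : ∀ k, 1 ≤ k → D (k + N) ≤ (1 - θ) * D k := by
    intro k hk
    have hPgood : ∀ g ∈ P.coeff.support, g ∈ H := by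
      intro g hg; rw [hPsupp, mem_HF] at hg; exact hg
    have h1 : (x ^ (k * m) - unif H) * P = x ^ ((k + N) * m) - unif H := by
      rw [sub_mul, hP, ← pow_add, unif_mul hPgood, hPtot, one_smul]
      congr 2
      ring
    have h2 := hcontract _ (hsupp_k k hk) (htot_k k)
    rw [h1] at h2
    exact h2
  -- geometric decay
  have hgeom : ∀ j : ℕ, D (1 + j * N) ≤ (1 - θ) ^ j * D 1 := by
    intro j
    induction j with
    | zero => simp
    | succ j ih =>
      have h1 : 1 + (j + 1) * N = (1 + j * N) + N := by ring
      have h2 : D ((1 + j * N) + N) ≤ (1 - θ) * D (1 + j * N) := hstepN _ (by omega)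
      rw [h1]
      calc D ((1 + j * N) + N) ≤ (1 - θ) * D (1 + j * N) := h2
        _ ≤ (1 - θ) * ((1 - θ) ^ j * D 1) := by
            apply mul_le_mul_of_nonneg_left ih
            linarith
        _ = (1 - θ) ^ (j + 1) * D 1 := by ring
  -- D tends to 0
  have hDto0 : Tendsto D atTop (nhds 0) := by
    rw [Metric.tendsto_atTop]
    intro δ hδ
    have habs : |1 - θ| < 1 := by rw [abs_lt]; constructor <;> linarith
    have hg0 : Tendsto (fun j : ℕ => (1 - θ) ^ j * D 1) atTop (nhds 0) := by
      have := tendsto_pow_atTop_nhds_zero_of_abs_lt_one habs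
      have h2 := this.mul_const (D 1)
      rwa [zero_mul] at h2
    obtain ⟨j, hj⟩ := (hg0.eventually (gt_mem_nhds hδ)).exists
    refine ⟨1 + j * N, fun k hk => ?_⟩
    rw [Real.dist_eq, sub_zero, abs_of_nonneg (hDnonneg k)]
    calc D k ≤ D (1 + j * N) := hanti _ _ (by omega) hk
      _ ≤ (1 - θ) ^ j * D 1 := hgeom j
      _ < δ := hj
  -- coordinatewise convergence
  have hbound : ∀ k, ‖(x ^ (k * m + r)).coeff g - (unif H * x ^ r).coeff g‖ ≤ D k := by
    intro k
    have h1 : (x ^ (k * m) - unif H) * x ^ r = x ^ (k * m + r) - unif H * x ^ r := by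
      rw [sub_mul, ← pow_add]
    have h2 : |((x ^ (k * m) - unif H) * x ^ r).coeff g| ≤ dd ((x ^ (k * m) - unif H) * x ^ r) :=
      abs_apply_le_dd _ g
    rw [h1] at h2
    have h3 : dd ((x ^ (k * m) - unif H) * x ^ r) ≤ D k * dd (x ^ r) := dd_mul_le _ _
    rw [h1] at h3
    have h4 : dd (x ^ r) = 1 := by
      rw [dd_eq_tot (pow_nonneg' hx0 hx1 r), tot_pow hx0 hx1]
    have h5 : (x ^ (k * m + r) - unif H * x ^ r).coeff g
        = (x ^ (k * m + r)).coeff g - (unif H * x ^ r).coeff g := by rw [MonoidAlgebra.coeff_sub, Finsupp.sub_apply]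
    rw [h5] at h2
    calc ‖(x ^ (k * m + r)).coeff g - (unif H * x ^ r).coeff g‖
        = |(x ^ (k * m + r)).coeff g - (unif H * x ^ r).coeff g| := rfl
      _ ≤ dd (x ^ (k * m + r) - unif H * x ^ r) := h2
      _ ≤ D k * dd (x ^ r) := h3
      _ = D k := by rw [h4, mul_one]
  have h0 : Tendsto (fun k => (x ^ (k * m + r)).coeff g - (unif H * x ^ r).coeff g) atTop (nhds 0) :=
    squeeze_zero_norm hbound hDto0
  have := h0.add_const ((unif H * x ^ r).coeff g)
  simpa using this

end Stmt9Aux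

end
end


open Stmt9Aux in

open scoped Classical in
/-- For `x` in the simplex of `R[G]`, the set of limits of converging subsequences of
`(x^k)` equals `{c_x x^r : 0 ≤ r < m_x}`; in particular `(x^n)` converges iff
`x ∈ R[G_x]`, i.e. `Supp(x) ⊆ G_x` (equivalently `m_x = 1`).  Convergence in the
finite-dimensional algebra `R[G]` is expressed coordinatewise. -/
theorem stmt9 {G : Type*} [Group G] [Fintype G]
    (x : MonoidAlgebra ℝ G) (hx1 : ∑ g : G, x.coeff g = 1) (hx0 : ∀ g, 0 ≤ x.coeff g)
    (n : ℕ) (hn : IsLeast {k : ℕ | 0 < k ∧ (x ^ k).coeff (1 : G) ≠ 0} n)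
    (H : Subgroup G) (hH : H = Subgroup.closure ((x ^ n).coeff.support : Set G))
    (c : MonoidAlgebra ℝ G)
    (hc : c = (Nat.card H : ℝ)⁻¹ •
      ∑ g ∈ Finset.univ.filter (· ∈ H), MonoidAlgebra.single g (1 : ℝ))
    (m : ℕ) (hm : IsLeast {k : ℕ | 0 < k ∧ ((x ^ k).coeff.support : Set G) ⊆ (H : Set G)} m) :
    {y : MonoidAlgebra ℝ G | ∃ φ : ℕ → ℕ, StrictMono φ ∧
        ∀ g : G, Tendsto (fun k => (x ^ φ k).coeff g) atTop (nhds (y.coeff g))}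
      = {y : MonoidAlgebra ℝ G | ∃ r : ℕ, r < m ∧ y = c * x ^ r} ∧
    ((∃ y : MonoidAlgebra ℝ G,
        ∀ g : G, Tendsto (fun k : ℕ => (x ^ k).coeff g) atTop (nhds (y.coeff g))) ↔
      (x.coeff.support : Set G) ⊆ (H : Set G)) := by
  classical
  have hx1' : tot x = 1 := hx1
  have hcu : c = unif H := by rw [hc]; rfl
  have hn1 : (1 : G) ∈ (x ^ n).coeff.support := Finsupp.mem_support_iff.mpr hn.1.2
  have hsets : {k : ℕ | 0 < k ∧ good x H k}
      = {k : ℕ | 0 < k ∧ ((x ^ k).coeff.support : Set G) ⊆ (H : Set G)} := by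
    ext k
    simp only [Set.mem_setOf_eq, good, Set.subset_def, Finset.mem_coe, SetLike.mem_coe]
  have hm' : IsLeast {k : ℕ | 0 < k ∧ good x H k} m := by rw [hsets]; exact hm
  have hm0 : 0 < m := hm'.1.1
  obtain ⟨N, hN1, hNs⟩ := exists_stable hx0 hx1' hm' hn.1.1 hn1 hH
  have main : ∀ (r : ℕ) (g : G),
      Filter.Tendsto (fun k => (x ^ (k * m + r)).coeff g) Filter.atTop (nhds ((unif H * x ^ r).coeff g)) :=
    tendsto_main hx0 hx1' hm' hN1 hNs
  have hsm : ∀ r : ℕ, StrictMono (fun k : ℕ => k * m + r) := by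
    intro r a b hab
    have h := Nat.mul_lt_mul_of_lt_of_le hab (le_refl m) hm0
    show a * m + r < b * m + r
    omega
  constructor
  · ext y
    simp only [Set.mem_setOf_eq]
    constructor
    · rintro ⟨φ, hφ, hconv⟩
      have hfreq : ∃ r, r < m ∧ {k : ℕ | φ k % m = r}.Infinite := by
        by_contra hcon
        push_neg at hcon
        have hfin : (⋃ r ∈ Finset.range m, {k : ℕ | φ k % m = r}).Finite := by
          refine Set.Finite.biUnion (Finset.range m).finite_toSet fun r hr => ?_
          exact hcon r (Finset.mem_range.mp hr)
        have huniv : (Set.univ : Set ℕ) ⊆ ⋃ r ∈ Finset.range m, {k : ℕ | φ k % m = r} := by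
          intro k _
          simp only [Set.mem_iUnion, Finset.mem_range, Set.mem_setOf_eq]
          exact ⟨φ k % m, Nat.mod_lt _ hm0, rfl⟩
        exact Set.infinite_univ (hfin.subset huniv)
      obtain ⟨r, hrm, hinf⟩ := hfreq
      have hfreq' : ∃ᶠ k in Filter.atTop, φ k % m = r :=
        Nat.frequently_atTop_iff_infinite.mpr hinf
      obtain ⟨ψ, hψ, hψr⟩ := Filter.extraction_of_frequently_atTop hfreq'
      set q : ℕ → ℕ := fun j => φ (ψ j) / m with hq
      have hqeq : ∀ j, q j * m + r = φ (ψ j) := by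
        intro j
        have h2 := hψr j
        show φ (ψ j) / m * m + r = φ (ψ j)
        rw [mul_comm, ← h2]
        exact Nat.div_add_mod _ _
      have hφψ : StrictMono (φ ∘ ψ) := hφ.comp hψ
      have hqat : Filter.Tendsto q Filter.atTop Filter.atTop := by
        rw [Filter.tendsto_atTop_atTop]
        intro b
        refine ⟨b * m + r + 1, fun j hj => ?_⟩
        have h1 : b * m + r + 1 ≤ φ (ψ j) := le_trans hj (hφψ.le_apply)
        have h2 := hqeq j
        have h3 : b * m < q j * m := by omega
        have h4 : b < q j := Nat.lt_of_mul_lt_mul_right h3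
        exact Nat.le_of_lt h4
      have hy : ∀ g : G, y.coeff g = (unif H * x ^ r).coeff g := by
        intro g
        have h1 : Filter.Tendsto (fun j => (x ^ (φ (ψ j))).coeff g) Filter.atTop (nhds (y.coeff g)) :=
          (hconv g).comp hψ.tendsto_atTop
        have h2 : Filter.Tendsto (fun j => (x ^ (q j * m + r)).coeff g) Filter.atTop
            (nhds ((unif H * x ^ r).coeff g)) := (main r g).comp hqat
        have h3 : (fun j => (x ^ (φ (ψ j))).coeff g) = fun j => (x ^ (q j * m + r)).coeff g :=
          funext fun j => by rw [hqeq j]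
        rw [h3] at h1
        exact tendsto_nhds_unique h1 h2
      refine ⟨r, hrm, ?_⟩
      rw [hcu]
      exact MonoidAlgebra.ext (Finsupp.ext hy)
    · rintro ⟨r, hrm, rfl⟩
      refine ⟨fun k => k * m + r, hsm r, fun g => ?_⟩
      rw [hcu]
      exact main r g
  · constructor
    · rintro ⟨y, hy⟩
      have hy0 : ∀ g : G, y.coeff g = (unif H * x ^ 0).coeff g := by
        intro g
        have h1 : Filter.Tendsto (fun k => (x ^ (k * m + 0)).coeff g) Filter.atTop (nhds (y.coeff g)) :=
          (hy g).comp (hsm 0).tendsto_atTop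
        exact tendsto_nhds_unique h1 (main 0 g)
      have hy1 : ∀ g : G, y.coeff g = (unif H * x ^ 1).coeff g := by
        intro g
        have h1 : Filter.Tendsto (fun k => (x ^ (k * m + 1)).coeff g) Filter.atTop (nhds (y.coeff g)) :=
          (hy g).comp (hsm 1).tendsto_atTop
        exact tendsto_nhds_unique h1 (main 1 g)
      have heq : ∀ g : G, (unif H).coeff g = (unif H * x).coeff g := by
        intro g
        have := (hy0 g).symm.trans (hy1 g)
        rwa [pow_zero, mul_one, pow_one] at this
      intro t ht
      rw [Finset.mem_coe] at ht
      have h1 : (1 : G) ∈ (unif H).coeff.support := by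
        rw [support_unif, mem_HF]; exact H.one_mem
      have h2 : (1 : G) * t ∈ (unif H * x).coeff.support :=
        mem_support_mul unif_nonneg hx0 h1 ht
      rw [one_mul, Finsupp.mem_support_iff, ← heq t, ← Finsupp.mem_support_iff,
        support_unif, mem_HF] at h2
      exact h2
    · intro hs
      have hm1 : m = 1 := by
        have h1 : m ≤ 1 := hm.2 ⟨one_pos, by simpa [pow_one] using hs⟩
        omega
      refine ⟨c, fun g => ?_⟩
      have := main 0 g
      rw [hcu]
      simp only [hm1, mul_one, add_zero, pow_zero] at this ⊢
      simpa using this
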